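/- Let Π be an orthogonal projection on a Hilbert space, Σ = 2Π - 1, and U a unitary operator such that [Σ, U] is a Hilbert–Schmidt operator. Then Π - Π U* Π U Π and Π - Π U Π U* Π are trace class operators. -/

import Mathlib

open ContinuousLinearMap

/-- A bounded operator is Hilbert–Schmidt if the sum of `‖T e i‖²` over some
Hilbert basis is finite. -/
def IsHilbertSchmidt {H : Type} [NormedAddCommGroup H] [InnerProductSpace ℂ H]
    [CompleteSpace H] (T : H →L[ℂ] H) : Prop :=
  ∃ (ι : Type) (e : HilbertBasis ι ℂ H), Summable fun i => ‖T (e i)‖ ^ 2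

/-- A bounded operator is trace class iff it is the product of two
Hilbert–Schmidt operators. -/
def IsTraceClass {H : Type} [NormedAddCommGroup H] [InnerProductSpace ℂ H]
    [CompleteSpace H] (T : H →L[ℂ] H) : Prop :=
  ∃ A B : H →L[ℂ] H, IsHilbertSchmidt A ∧ IsHilbertSchmidt B ∧ T = A * B

open scoped ENNReal NNReal

section aux
variable {H : Type} [NormedAddCommGroup H] [InnerProductSpace ℂ H] [CompleteSpace H]

lemma parseval_hs {ι : Type} (e : HilbertBasis ι ℂ H) (x : H) :
    HasSum (fun j => ‖(inner ℂ (e j) x : ℂ)‖ ^ 2) (‖x‖ ^ 2) := by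
  have hm : Memℓp (e.repr x) 2 := lp.memℓp (e.repr x)
  have hsum : Summable fun j => ‖e.repr x j‖ ^ (2 : ℝ≥0∞).toReal := hm.summable (by norm_num)
  have hnorm : ‖e.repr x‖ ^ (2 : ℝ≥0∞).toReal = ∑' j, ‖e.repr x j‖ ^ (2 : ℝ≥0∞).toReal :=
    lp.norm_rpow_eq_tsum (by norm_num) (e.repr x)
  have e2 : (2 : ℝ≥0∞).toReal = ((2 : ℕ) : ℝ) := by norm_num
  simp_rw [e2, Real.rpow_natCast] at hsum hnorm
  simp_rw [e.repr_apply_apply] at hsum hnorm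
  rw [e.repr.norm_map] at hnorm
  exact hnorm ▸ hsum.hasSum

lemma parseval_ennreal {ι : Type} (e : HilbertBasis ι ℂ H) (x : H) :
    ∑' j, ENNReal.ofReal (‖(inner ℂ (e j) x : ℂ)‖ ^ 2) = ENNReal.ofReal (‖x‖ ^ 2) := by
  have h := parseval_hs e x
  rw [← ENNReal.ofReal_tsum_of_nonneg (fun j => sq_nonneg _) h.summable, h.tsum_eq]

lemma IsHilbertSchmidt.adjoint' {T : H →L[ℂ] H} (h : IsHilbertSchmidt T) :
    IsHilbertSchmidt (adjoint T) := by
  obtain ⟨ι, e, hsum⟩ := h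
  refine ⟨ι, e, ?_⟩
  have key : (∑' i, ENNReal.ofReal (‖adjoint T (e i)‖ ^ 2)) ≠ ⊤ := by
    have : (∑' i, ENNReal.ofReal (‖adjoint T (e i)‖ ^ 2))
        = ENNReal.ofReal (∑' j, ‖T (e j)‖ ^ 2) := by
      calc (∑' i, ENNReal.ofReal (‖adjoint T (e i)‖ ^ 2))
          = ∑' i, ∑' j, ENNReal.ofReal (‖(inner ℂ (e j) (adjoint T (e i)) : ℂ)‖ ^ 2) := by
            exact tsum_congr fun i => (parseval_ennreal e _).symm
        _ = ∑' j, ∑' i, ENNReal.ofReal (‖(inner ℂ (e j) (adjoint T (e i)) : ℂ)‖ ^ 2) :=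
            ENNReal.tsum_comm
        _ = ∑' j, ∑' i, ENNReal.ofReal (‖(inner ℂ (e i) (T (e j)) : ℂ)‖ ^ 2) := by
            refine tsum_congr fun j => tsum_congr fun i => ?_
            rw [adjoint_inner_right, ← inner_conj_symm, RCLike.norm_conj]
        _ = ∑' j, ENNReal.ofReal (‖T (e j)‖ ^ 2) :=
            tsum_congr fun j => parseval_ennreal e _
        _ = ENNReal.ofReal (∑' j, ‖T (e j)‖ ^ 2) :=
            (ENNReal.ofReal_tsum_of_nonneg (fun j => sq_nonneg _) hsum).symm
    rw [this]; exact ENNReal.ofReal_ne_top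
  have h2 := ENNReal.summable_toReal key
  refine h2.congr fun i => ?_
  exact ENNReal.toReal_ofReal (sq_nonneg _)

lemma IsHilbertSchmidt.lmul {T : H →L[ℂ] H} (h : IsHilbertSchmidt T) (B : H →L[ℂ] H) :
    IsHilbertSchmidt (B * T) := by
  obtain ⟨ι, e, hsum⟩ := h
  refine ⟨ι, e, Summable.of_nonneg_of_le (fun i => sq_nonneg _) (fun i => ?_)
    (hsum.mul_left (‖B‖ ^ 2))⟩
  have : ‖(B * T) (e i)‖ ≤ ‖B‖ * ‖T (e i)‖ := (B.le_opNorm _)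
  calc ‖(B * T) (e i)‖ ^ 2 ≤ (‖B‖ * ‖T (e i)‖) ^ 2 :=
        pow_le_pow_left₀ (norm_nonneg _) this 2
    _ = ‖B‖ ^ 2 * ‖T (e i)‖ ^ 2 := mul_pow _ _ _

lemma IsHilbertSchmidt.rmul {T : H →L[ℂ] H} (h : IsHilbertSchmidt T) (C : H →L[ℂ] H) :
    IsHilbertSchmidt (T * C) := by
  have : T * C = adjoint (adjoint C * adjoint T) := by
    rw [← star_eq_adjoint, ← star_eq_adjoint, ← star_eq_adjoint, star_mul, star_star, star_star]
  rw [this]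
  exact (h.adjoint'.lmul (adjoint C)).adjoint'

lemma key_alg {R : Type} [Ring R] (P A B : R) (hP : P * P = P) (hAB : A * B = 1) :
    (P * (A * (2 • P - 1) - (2 • P - 1) * A)) * (((2 • P - 1) * B - B * (2 • P - 1)) * P)
      = 4 • (P - P * A * P * B * P) := by
  have hP' : ∀ x : R, P * (P * x) = P * x := fun x => by rw [← mul_assoc, hP]
  have hAB' : ∀ x : R, A * (B * x) = x := fun x => by rw [← mul_assoc, hAB, one_mul]
  simp only [two_smul, mul_sub, sub_mul, mul_add, add_mul, mul_assoc, hP, hAB, hP', hAB',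
    mul_one, one_mul]
  abel

end aux

theorem proj_unitary_traceclass
    {H : Type} [NormedAddCommGroup H] [InnerProductSpace ℂ H] [CompleteSpace H]
    [TopologicalSpace.SeparableSpace H]
    (P U : H →L[ℂ] H) (hP : P * P = P) (hPsa : adjoint P = P)
    (hU : U * adjoint U = 1) (hU' : adjoint U * U = 1)
    (hHS : IsHilbertSchmidt ((2 • P - 1) * U - U * (2 • P - 1))) :
    IsTraceClass (P - P * adjoint U * P * U * P) ∧
    IsTraceClass (P - P * U * P * adjoint U * P) := by
  set K : H →L[ℂ] H := (2 • P - 1) * U - U * (2 • P - 1) with hK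
  have hKadj : adjoint K = adjoint U * (2 • P - 1) - (2 • P - 1) * adjoint U := by
    have h1 : star P = P := by rw [star_eq_adjoint, hPsa]
    simp only [hK, ← star_eq_adjoint, star_sub, star_mul, star_one, star_nsmul, h1]
  have hquarter : ∀ x : H →L[ℂ] H, ((1/4 : ℂ) • (4 • x)) = x := by
    intro x
    rw [← Nat.cast_smul_eq_nsmul ℂ 4 x, smul_smul]
    norm_num
  constructor
  · refine ⟨((1/4 : ℂ) • P) * adjoint K, K * P, (hHS.adjoint'.lmul _), hHS.rmul _, ?_⟩
    have halg := key_alg P (adjoint U) U hP hU'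
    rw [smul_mul_assoc, smul_mul_assoc, hKadj, hK, halg, hquarter]
  · refine ⟨((1/4 : ℂ) • P) * K, adjoint K * P, (hHS.lmul _), (hHS.adjoint'.rmul _), ?_⟩
    have halg := key_alg P U (adjoint U) hP hU
    have hneg1 : U * (2 • P - 1) - (2 • P - 1) * U = -K := by rw [hK]; abel
    have hneg2 : (2 • P - 1) * adjoint U - adjoint U * (2 • P - 1) = -adjoint K := by
      rw [hKadj]; abel
    rw [hneg1, hneg2] at halg
    have hflip : (P * K) * (adjoint K * P) = (P * -K) * (-adjoint K * P) := by
      simp [neg_mul, mul_neg]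
    rw [smul_mul_assoc, smul_mul_assoc, hflip, halg, hquarter]
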